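/- Let ν > 0, M ≥ 0, C ≥ 0. Suppose p and q are measurable with p(x) ≥ ν and |q(x)| ≤ M for a.e. x ∈ Ω, u and u_c are continuous and differentiable on ℝⁿ, the functions p|∇(u−u_c)|², q(u−u_c)², |∇(u−u_c)|² and (u−u_c)² are integrable on Ω, and v = u − u_c satisfies the Poincaré inequality ∫_Ω v² dx ≤ C ∫_Ω |∇v|² dx. If |λ| M C ≤ ν, then G_λ(c) ≥ 0. If moreover |λ| M C < ν, then G_λ(c) = 0 if and only if u = u_c at every point of Ω. -/

import Mathlib

open MeasureTheory Set
open scoped RealInnerProductSpace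

/-- A continuous function that vanishes a.e. on an open set vanishes everywhere on it. -/
lemma cont_zero_of_ae_zero {n : ℕ} {Ω : Set (EuclideanSpace ℝ (Fin n))} (hΩ : IsOpen Ω)
    {g : EuclideanSpace ℝ (Fin n) → ℝ} (hg : Continuous g)
    (h : g =ᵐ[volume.restrict Ω] 0) : ∀ x ∈ Ω, g x = 0 := by
  intro x hx
  by_contra hne
  have hU : IsOpen (Ω ∩ g ⁻¹' {0}ᶜ) := hΩ.inter (isOpen_compl_singleton.preimage hg)
  have hxU : x ∈ Ω ∩ g ⁻¹' {0}ᶜ := ⟨hx, hne⟩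
  have hpos : 0 < volume (Ω ∩ g ⁻¹' {0}ᶜ) := hU.measure_pos volume ⟨x, hxU⟩
  have h0 : volume.restrict Ω {y | ¬ g y = (0 : EuclideanSpace ℝ (Fin n) → ℝ) y} = 0 := h
  rw [Measure.restrict_apply₀'] at h0
  · have hsub : Ω ∩ g ⁻¹' {0}ᶜ ⊆ {y | ¬ g y = (0 : EuclideanSpace ℝ (Fin n) → ℝ) y} ∩ Ω := by
      intro y hy; exact ⟨hy.2, hy.1⟩
    exact absurd (measure_mono_null hsub h0) hpos.ne'
  · exact hΩ.measurableSet.nullMeasurableSet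

theorem Glambda_nonneg_and_zero_iff {n : ℕ} (hn : 1 ≤ n)
    (Ω : Set (EuclideanSpace ℝ (Fin n))) (hΩ : IsOpen Ω)
    (lam : ℝ) (u uc p q f : EuclideanSpace ℝ (Fin n) → ℝ)
    (ν M C : ℝ) (hν : 0 < ν) (hM : 0 ≤ M) (hC : 0 ≤ C)
    (hpm : Measurable p) (hqm : Measurable q)
    (hp : ∀ᵐ x ∂(volume.restrict Ω), ν ≤ p x)
    (hq : ∀ᵐ x ∂(volume.restrict Ω), |q x| ≤ M)
    (huC : Continuous u) (hu : Differentiable ℝ u)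
    (hucC : Continuous uc) (huc : Differentiable ℝ uc)
    (hI1 : IntegrableOn (fun x => p x * ‖gradient (fun y => u y - uc y) x‖ ^ 2) Ω)
    (hI2 : IntegrableOn (fun x => q x * (u x - uc x) ^ 2) Ω)
    (hI3 : IntegrableOn (fun x => ‖gradient (fun y => u y - uc y) x‖ ^ 2) Ω)
    (hI4 : IntegrableOn (fun x => (u x - uc x) ^ 2) Ω)
    (hPoincare : ∫ x in Ω, (u x - uc x) ^ 2
        ≤ C * ∫ x in Ω, ‖gradient (fun y => u y - uc y) x‖ ^ 2)
    (hsmall : |lam| * M * C ≤ ν) :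
    0 ≤ ∫ x in Ω, (p x * ‖gradient (fun y => u y - uc y) x‖ ^ 2
        + lam * (q x * (u x - uc x) ^ 2)) ∧
      (|lam| * M * C < ν →
        ((∫ x in Ω, (p x * ‖gradient (fun y => u y - uc y) x‖ ^ 2
            + lam * (q x * (u x - uc x) ^ 2))) = 0
          ↔ ∀ x ∈ Ω, u x = uc x)) := by
  set Ig := ∫ x in Ω, ‖gradient (fun y => u y - uc y) x‖ ^ 2 with hIg
  set Iv := ∫ x in Ω, (u x - uc x) ^ 2 with hIv
  have hg0 : 0 ≤ Ig := setIntegral_nonneg hΩ.measurableSet fun x _ => by positivity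
  have hv0 : 0 ≤ Iv := setIntegral_nonneg hΩ.measurableSet fun x _ => by positivity
  -- lower bound for ∫ p g
  have hA : ν * Ig ≤ ∫ x in Ω, p x * ‖gradient (fun y => u y - uc y) x‖ ^ 2 := by
    rw [hIg, ← integral_const_mul]
    refine integral_mono_ae (hI3.const_mul ν) hI1 ?_
    filter_upwards [hp] with x hx
    exact mul_le_mul_of_nonneg_right hx (by positivity)
  -- bound for |∫ q v²|
  have hB : |∫ x in Ω, q x * (u x - uc x) ^ 2| ≤ M * Iv := by
    calc |∫ x in Ω, q x * (u x - uc x) ^ 2|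
        ≤ ∫ x in Ω, |q x * (u x - uc x) ^ 2| := by
          simpa only [Real.norm_eq_abs] using
            norm_integral_le_integral_norm (μ := volume.restrict Ω)
              (fun x => q x * (u x - uc x) ^ 2)
      _ ≤ ∫ x in Ω, M * (u x - uc x) ^ 2 := by
          refine integral_mono_ae hI2.abs (hI4.const_mul M) ?_
          filter_upwards [hq] with x hx
          rw [abs_mul, abs_of_nonneg (by positivity : (0:ℝ) ≤ (u x - uc x) ^ 2)]
          exact mul_le_mul_of_nonneg_right hx (by positivity)
      _ = M * Iv := by rw [hIv, ← integral_const_mul]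
  have hsplit : (∫ x in Ω, (p x * ‖gradient (fun y => u y - uc y) x‖ ^ 2
        + lam * (q x * (u x - uc x) ^ 2)))
      = (∫ x in Ω, p x * ‖gradient (fun y => u y - uc y) x‖ ^ 2)
        + lam * ∫ x in Ω, q x * (u x - uc x) ^ 2 := by
    rw [integral_add hI1 (hI2.const_mul lam), integral_const_mul]
  have hlb : lam * (∫ x in Ω, q x * (u x - uc x) ^ 2) ≥ -(|lam| * (M * Iv)) := by
    have h1 : |lam * ∫ x in Ω, q x * (u x - uc x) ^ 2| ≤ |lam| * (M * Iv) := by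
      rw [abs_mul]
      exact mul_le_mul_of_nonneg_left hB (abs_nonneg lam)
    linarith [neg_abs_le (lam * ∫ x in Ω, q x * (u x - uc x) ^ 2)]
  have habs : 0 ≤ |lam| := abs_nonneg lam
  have hIvIg : Iv ≤ C * Ig := hPoincare
  constructor
  · rw [hsplit]
    nlinarith [mul_le_mul_of_nonneg_left hIvIg (mul_nonneg habs hM),
      mul_le_mul_of_nonneg_right hsmall hg0]
  · intro hstrict
    constructor
    · intro hG0
      rw [hsplit] at hG0
      -- deduce Ig = 0 then Iv = 0
      have hIg0 : Ig = 0 := by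
        nlinarith [mul_le_mul_of_nonneg_left hIvIg (mul_nonneg habs hM),
          neg_abs_le (lam * ∫ x in Ω, q x * (u x - uc x) ^ 2),
          abs_mul lam (∫ x in Ω, q x * (u x - uc x) ^ 2),
          mul_le_mul_of_nonneg_left hB habs]
      have hIv0 : Iv = 0 := le_antisymm (by rw [hIg0, mul_zero] at hIvIg; exact hIvIg) hv0
      have hzero : (fun x => (u x - uc x) ^ 2) =ᵐ[volume.restrict Ω] 0 :=
        (integral_eq_zero_iff_of_nonneg (fun x => by positivity) hI4).mp hIv0
      intro x hx
      have := cont_zero_of_ae_zero hΩ ((huC.sub hucC).pow 2)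
        hzero x hx
      nlinarith [show (u x - uc x) ^ 2 = 0 from this]
    · intro heq
      have h0 : EqOn (fun x => (p x * ‖gradient (fun y => u y - uc y) x‖ ^ 2
          + lam * (q x * (u x - uc x) ^ 2))) 0 Ω := by
        intro x hx
        have hvx : u x - uc x = 0 := by rw [heq x hx]; ring
        have hgr : gradient (fun y => u y - uc y) x = 0 := by
          have hev : (fun y => u y - uc y) =ᶠ[nhds x] fun _ => (0 : ℝ) := by
            filter_upwards [hΩ.mem_nhds hx] with y hy
            rw [heq y hy]; ring
          rw [hev.gradient_eq, gradient_fun_const]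
        simp [hvx, hgr]
      rw [setIntegral_congr_fun hΩ.measurableSet h0]
      simp
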